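/- arXiv:2508.17812 — 5 statements merged into one kernel-verified Lean document; each statement's English description precedes it below -/
import Mathlib

section
/- Let q > 0, μ ∈ ℝ, σ > 0, and d ∈ ℝ with d ≠ 0. Then ∫_0^∞ e^{−qt} (|d|/(σ√(2πt³))) exp(−(d − μt)²/(2σ²t)) dt = exp(μd/σ² − |d| √(2qσ² + μ²)/σ²). -/
open Real MeasureTheory Set

lemma aux_deriv (a b : ℝ) {t : ℝ} (ht : t ∈ Ioi (0:ℝ)) :
    HasDerivWithinAt (fun t => Real.sqrt a * Real.sqrt t - Real.sqrt b / Real.sqrt t)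
      (Real.sqrt a / (2 * Real.sqrt t) + Real.sqrt b / (2 * (t * Real.sqrt t))) (Ioi 0) t := by
  have ht0 : (0:ℝ) < t := ht
  have hst : (0:ℝ) < Real.sqrt t := Real.sqrt_pos.2 ht0
  have h1 : HasDerivAt Real.sqrt (1 / (2 * Real.sqrt t)) t := Real.hasDerivAt_sqrt ht0.ne'
  have h2 : HasDerivAt (fun t => Real.sqrt a * Real.sqrt t)
      (Real.sqrt a * (1 / (2 * Real.sqrt t))) t := h1.const_mul _
  have h3 : HasDerivAt (fun t => Real.sqrt b / Real.sqrt t)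
      ((0 * Real.sqrt t - Real.sqrt b * (1 / (2 * Real.sqrt t))) / (Real.sqrt t)^2) t :=
    (hasDerivAt_const t (Real.sqrt b)).div h1 hst.ne'
  have := (h2.sub h3).hasDerivWithinAt (s := Ioi (0:ℝ))
  refine this.congr_deriv ?_
  rw [Real.sq_sqrt ht0.le]
  field_simp
  ring

lemma aux_inj (a b : ℝ) (ha : 0 < a) (hb : 0 < b) :
    InjOn (fun t => Real.sqrt a * Real.sqrt t - Real.sqrt b / Real.sqrt t) (Ioi (0:ℝ)) := by
  have hsa : (0:ℝ) < Real.sqrt a := Real.sqrt_pos.2 ha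
  have hsb : (0:ℝ) < Real.sqrt b := Real.sqrt_pos.2 hb
  have : StrictMonoOn (fun t => Real.sqrt a * Real.sqrt t - Real.sqrt b / Real.sqrt t) (Ioi (0:ℝ)) := by
    intro s hs t ht hst
    have hs0 : (0:ℝ) < s := hs
    have ht0 : (0:ℝ) < t := ht
    have h1 : Real.sqrt s < Real.sqrt t := Real.sqrt_lt_sqrt hs0.le hst
    have hss : (0:ℝ) < Real.sqrt s := Real.sqrt_pos.2 hs0
    have h2 : Real.sqrt b / Real.sqrt t < Real.sqrt b / Real.sqrt s :=
      div_lt_div_of_pos_left hsb hss h1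
    have h3 : Real.sqrt a * Real.sqrt s < Real.sqrt a * Real.sqrt t :=
      mul_lt_mul_of_pos_left h1 hsa
    dsimp only
    linarith
  exact this.injOn

lemma aux_surj (a b : ℝ) (ha : 0 < a) (hb : 0 < b) :
    (fun t => Real.sqrt a * Real.sqrt t - Real.sqrt b / Real.sqrt t) '' (Ioi (0:ℝ)) = univ := by
  have hsa : (0:ℝ) < Real.sqrt a := Real.sqrt_pos.2 ha
  have hsb : (0:ℝ) < Real.sqrt b := Real.sqrt_pos.2 hb
  apply eq_univ_of_forall
  intro v
  set c : ℝ := Real.sqrt a * Real.sqrt b with hc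
  have hc0 : 0 < c := mul_pos hsa hsb
  set w : ℝ := Real.sqrt (v^2 + 4*c) with hw
  have hw2 : w^2 = v^2 + 4*c := Real.sq_sqrt (by nlinarith [sq_nonneg v])
  have hwv : -v < w := by
    nlinarith [Real.sqrt_nonneg (v^2+4*c), sq_nonneg (w+v)]
  set u : ℝ := (v + w)/2 with hu
  have hu0 : 0 < u := by simp only [hu]; linarith
  have huq : u^2 - v*u - c = 0 := by
    have : u^2 - v*u = (w^2 - v^2)/4 := by simp only [hu]; ring
    rw [this, hw2]; ring
  refine ⟨(u / Real.sqrt a)^2, ?_, ?_⟩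
  · exact pow_pos (div_pos hu0 hsa) 2
  · have hst : Real.sqrt ((u / Real.sqrt a)^2) = u / Real.sqrt a :=
      Real.sqrt_sq (div_pos hu0 hsa).le
    dsimp only
    rw [hst]
    have ha2 : Real.sqrt a * (u / Real.sqrt a) = u := by field_simp
    have hb2 : Real.sqrt b / (u / Real.sqrt a) = c / u := by
      rw [hc]; field_simp
    rw [ha2, hb2]
    field_simp
    linarith [huq]

lemma aux_cont (a b : ℝ) {h : ℝ → ℝ} (hh : Continuous h) (hh0 : ∀ t ∈ Ioi (0:ℝ), h t ≠ 0) :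
    ContinuousOn (fun t : ℝ => Real.exp (-(a*t) - b/t) / h t) (Ioi (0:ℝ)) := by
  apply ContinuousOn.div _ hh.continuousOn hh0
  apply Real.continuous_exp.comp_continuousOn
  exact ((continuous_const.mul continuous_id).neg.continuousOn).sub
    (continuousOn_const.div continuousOn_id (fun t ht => ne_of_gt ht))


lemma key (a b : ℝ) (ha : 0 < a) (hb : 0 < b) :
    ∫ t in Ioi (0:ℝ), Real.exp (-(a*t) - b/t) / (t * Real.sqrt t)
      = Real.sqrt (π/b) * Real.exp (-(2*Real.sqrt (a*b))) := by
  have hsa : (0:ℝ) < Real.sqrt a := Real.sqrt_pos.2 ha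
  have hsb : (0:ℝ) < Real.sqrt b := Real.sqrt_pos.2 hb
  set g : ℝ → ℝ := fun t => Real.sqrt a * Real.sqrt t - Real.sqrt b / Real.sqrt t with hgdef
  set g' : ℝ → ℝ := fun t => Real.sqrt a / (2 * Real.sqrt t) + Real.sqrt b / (2 * (t * Real.sqrt t)) with hg'def
  set f1 : ℝ → ℝ := fun t => Real.exp (-(a*t) - b/t) / Real.sqrt t with hf1def
  set f2 : ℝ → ℝ := fun t => Real.exp (-(a*t) - b/t) / (t * Real.sqrt t) with hf2def
  have hderiv : ∀ t ∈ Ioi (0:ℝ), HasDerivWithinAt g (g' t) (Ioi 0) t := fun t ht => aux_deriv a b ht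
  have hinj := aux_inj a b ha hb
  have himg := aux_surj a b ha hb
  -- basic pointwise facts
  have hg'pos : ∀ t ∈ Ioi (0:ℝ), 0 < g' t := by
    intro t ht
    have ht0 : (0:ℝ) < t := ht
    have : (0:ℝ) < Real.sqrt t := Real.sqrt_pos.2 ht0
    positivity
  have hgsq : ∀ t ∈ Ioi (0:ℝ), Real.exp (-(g t)^2)
      = Real.exp (2*Real.sqrt (a*b)) * Real.exp (-(a*t) - b/t) := by
    intro t ht
    have ht0 : (0:ℝ) < t := ht
    have hst : (0:ℝ) < Real.sqrt t := Real.sqrt_pos.2 ht0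
    have e1 : (Real.sqrt a * Real.sqrt t)^2 = a*t := by
      rw [mul_pow, Real.sq_sqrt ha.le, Real.sq_sqrt ht0.le]
    have e2 : (Real.sqrt b / Real.sqrt t)^2 = b/t := by
      rw [div_pow, Real.sq_sqrt hb.le, Real.sq_sqrt ht0.le]
    have e3 : (Real.sqrt a * Real.sqrt t) * (Real.sqrt b / Real.sqrt t) = Real.sqrt (a*b) := by
      rw [Real.sqrt_mul ha.le]
      field_simp
    have e4 : (g t)^2 = a*t + b/t - 2*Real.sqrt (a*b) := by
      rw [hgdef]
      dsimp only
      rw [sub_sq, e1, e2]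
      linarith [e3]
    rw [← Real.exp_add, e4]
    congr 1
    ring
  -- change of variables
  have hCoV : ∫ x : ℝ, Real.exp (-x^2)
      = ∫ t in Ioi (0:ℝ), |g' t| • Real.exp (-(g t)^2) := by
    rw [← MeasureTheory.setIntegral_univ, ← himg]
    exact integral_image_eq_integral_abs_deriv_smul measurableSet_Ioi hderiv hinj _
  have hgauss : ∫ x : ℝ, Real.exp (-x^2) = Real.sqrt π := by
    have := integral_gaussian (1:ℝ)
    simpa using this
  -- integrability of the combined function
  have hIntComb : IntegrableOn (fun t => |g' t| • Real.exp (-(g t)^2)) (Ioi (0:ℝ)) := by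
    have hbase : IntegrableOn (fun x : ℝ => Real.exp (-x^2)) (g '' Ioi (0:ℝ)) := by
      rw [hgdef, himg, integrableOn_univ]
      simpa using integrable_exp_neg_mul_sq (one_pos (α := ℝ))
    exact (integrableOn_image_iff_integrableOn_abs_deriv_smul measurableSet_Ioi hderiv hinj
      (fun x => Real.exp (-x^2))).1 hbase
  -- integrability of f1 and f2
  have hIntf1 : IntegrableOn f1 (Ioi (0:ℝ)) := by
    apply Integrable.mono' (hIntComb.const_mul (2 / Real.sqrt a))
    · exact (aux_cont a b Real.continuous_sqrt
        (fun t ht => (Real.sqrt_pos.2 ht).ne')).aestronglyMeasurable measurableSet_Ioi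
    · filter_upwards [ae_restrict_mem measurableSet_Ioi] with t ht
      have ht0 : (0:ℝ) < t := ht
      have hst : (0:ℝ) < Real.sqrt t := Real.sqrt_pos.2 ht0
      have habs : |g' t| = g' t := abs_of_pos (hg'pos t ht)
      rw [habs, smul_eq_mul]
      have hf1v : f1 t = Real.exp (-(a*t) - b/t) / Real.sqrt t := rfl
      have : ‖f1 t‖ = f1 t := by
        rw [Real.norm_eq_abs, abs_of_pos]; rw [hf1v]; positivity
      rw [this, hf1v, hgsq t ht]
      have hexp1 : (1:ℝ) ≤ Real.exp (2*Real.sqrt (a*b)) := by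
        apply Real.one_le_exp; positivity
      have hgl : Real.sqrt a / (2 * Real.sqrt t) ≤ g' t := by
        rw [hg'def]; dsimp only
        have : (0:ℝ) < Real.sqrt b / (2 * (t * Real.sqrt t)) := by positivity
        linarith
      calc Real.exp (-(a*t) - b/t) / Real.sqrt t
          = (2 / Real.sqrt a) * ((Real.sqrt a / (2 * Real.sqrt t)) * (1 * Real.exp (-(a*t) - b/t))) := by
            field_simp
        _ ≤ (2 / Real.sqrt a) * (g' t * (Real.exp (2*Real.sqrt (a*b)) * Real.exp (-(a*t) - b/t))) := by
            apply mul_le_mul_of_nonneg_left _ (by positivity)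
            apply mul_le_mul hgl (by apply mul_le_mul_of_nonneg_right hexp1 (Real.exp_pos _).le)
              (by positivity) (hg'pos t ht).le
        _ = _ := by ring
  have hIntf2 : IntegrableOn f2 (Ioi (0:ℝ)) := by
    apply Integrable.mono' (hIntComb.const_mul (2 / Real.sqrt b))
    · exact (aux_cont a b (continuous_id.mul Real.continuous_sqrt)
        (fun t ht => by
          have ht0 : (0:ℝ) < t := ht
          have hst := Real.sqrt_pos.2 ht0
          show t * Real.sqrt t ≠ 0
          positivity)).aestronglyMeasurable measurableSet_Ioi
    · filter_upwards [ae_restrict_mem measurableSet_Ioi] with t ht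
      have ht0 : (0:ℝ) < t := ht
      have hst : (0:ℝ) < Real.sqrt t := Real.sqrt_pos.2 ht0
      have habs : |g' t| = g' t := abs_of_pos (hg'pos t ht)
      rw [habs, smul_eq_mul]
      have hf2v : f2 t = Real.exp (-(a*t) - b/t) / (t * Real.sqrt t) := rfl
      have : ‖f2 t‖ = f2 t := by
        rw [Real.norm_eq_abs, abs_of_pos]; rw [hf2v]; positivity
      rw [this, hf2v, hgsq t ht]
      have hexp1 : (1:ℝ) ≤ Real.exp (2*Real.sqrt (a*b)) := by
        apply Real.one_le_exp; positivity
      have hgl : Real.sqrt b / (2 * (t * Real.sqrt t)) ≤ g' t := by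
        rw [hg'def]; dsimp only
        have : (0:ℝ) < Real.sqrt a / (2 * Real.sqrt t) := by positivity
        linarith
      calc Real.exp (-(a*t) - b/t) / (t * Real.sqrt t)
          = (2 / Real.sqrt b) * ((Real.sqrt b / (2 * (t * Real.sqrt t))) * (1 * Real.exp (-(a*t) - b/t))) := by
            field_simp
        _ ≤ (2 / Real.sqrt b) * (g' t * (Real.exp (2*Real.sqrt (a*b)) * Real.exp (-(a*t) - b/t))) := by
            apply mul_le_mul_of_nonneg_left _ (by positivity)
            apply mul_le_mul hgl (by apply mul_le_mul_of_nonneg_right hexp1 (Real.exp_pos _).le)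
              (by positivity) (hg'pos t ht).le
        _ = _ := by ring
  -- rewrite the CoV integral as a combination of f1 and f2
  have hsplit : ∫ t in Ioi (0:ℝ), |g' t| • Real.exp (-(g t)^2)
      = Real.exp (2*Real.sqrt (a*b)) * ((Real.sqrt a / 2) * (∫ t in Ioi (0:ℝ), f1 t)
          + (Real.sqrt b / 2) * (∫ t in Ioi (0:ℝ), f2 t)) := by
    have hcongr : ∫ t in Ioi (0:ℝ), |g' t| • Real.exp (-(g t)^2)
        = ∫ t in Ioi (0:ℝ), Real.exp (2*Real.sqrt (a*b)) *
            ((Real.sqrt a / 2) * f1 t + (Real.sqrt b / 2) * f2 t) := by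
      apply setIntegral_congr_fun measurableSet_Ioi
      intro t ht
      have ht0 : (0:ℝ) < t := ht
      have hst : (0:ℝ) < Real.sqrt t := Real.sqrt_pos.2 ht0
      dsimp only
      rw [abs_of_pos (hg'pos t ht), smul_eq_mul, hgsq t ht]
      rw [hg'def, hf1def, hf2def]
      dsimp only
      field_simp
    rw [hcongr, integral_const_mul]
    congr 1
    rw [integral_add (hIntf1.const_mul _) (hIntf2.const_mul _),
        integral_const_mul, integral_const_mul]
  -- second change of variables : √a ∫ f1 = √b ∫ f2
  have hJ : Real.sqrt a * (∫ t in Ioi (0:ℝ), f1 t)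
      = Real.sqrt b * (∫ t in Ioi (0:ℝ), f2 t) := by
    set φ : ℝ → ℝ := fun t => b / (a * t) with hφdef
    have hφderiv : ∀ t ∈ Ioi (0:ℝ), HasDerivWithinAt φ (-(b/(a*t^2))) (Ioi 0) t := by
      intro t ht
      have ht0 : (0:ℝ) < t := ht
      have : HasDerivAt φ ((b/a) * (-(t^2)⁻¹)) t := by
        have h1 : HasDerivAt (fun t:ℝ => t⁻¹) (-(t^2)⁻¹) t := hasDerivAt_inv ht0.ne'
        have h2 := h1.const_mul (b/a)
        apply h2.congr_of_eventuallyEq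
        filter_upwards [eventually_ne_nhds ht0.ne'] with x hx
        rw [hφdef]
        field_simp
      have h3 := this.hasDerivWithinAt (s := Ioi (0:ℝ))
      refine h3.congr_deriv ?_
      ring
    have hφinj : InjOn φ (Ioi (0:ℝ)) := by
      intro s hs t ht hst
      have hs0 : (0:ℝ) < s := hs
      have ht0 : (0:ℝ) < t := ht
      rw [hφdef] at hst
      dsimp only at hst
      rw [div_eq_div_iff (by positivity) (by positivity)] at hst
      have h1 := mul_left_cancel₀ (show b ≠ 0 from hb.ne') hst
      have h2 := mul_left_cancel₀ (show a ≠ 0 from ha.ne') h1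
      exact h2.symm
    have hφimg : φ '' (Ioi (0:ℝ)) = Ioi (0:ℝ) := by
      apply Subset.antisymm
      · rintro x ⟨t, ht, rfl⟩
        have ht0 : (0:ℝ) < t := ht
        rw [hφdef]
        exact div_pos hb (by positivity)
      · intro y hy
        have hy0 : (0:ℝ) < y := hy
        refine ⟨b/(a*y), div_pos hb (by positivity), ?_⟩
        rw [hφdef]
        dsimp only
        rw [div_eq_iff (by positivity)]
        field_simp
    have h2 := integral_image_eq_integral_abs_deriv_smul measurableSet_Ioi hφderiv hφinj f1
    rw [hφimg] at h2
    rw [h2, ← integral_const_mul, ← integral_const_mul]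
    apply setIntegral_congr_fun measurableSet_Ioi
    intro t ht
    have ht0 : (0:ℝ) < t := ht
    have hst : (0:ℝ) < Real.sqrt t := Real.sqrt_pos.2 ht0
    have habs : |(-(b/(a*t^2)))| = b/(a*t^2) := by
      rw [abs_neg, abs_of_pos (by positivity)]
    dsimp only
    rw [habs, smul_eq_mul, hf1def, hf2def, hφdef]
    dsimp only
    have harg1 : a * (b/(a*t)) = b/t := by
      field_simp
    have harg2 : b / (b/(a*t)) = a*t := by
      rw [div_div_eq_mul_div, div_eq_iff (by positivity)]
      ring
    rw [harg1, harg2]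
    have hargeq : -(b/t) - a*t = -(a*t) - b/t := by ring
    rw [hargeq]
    have hsφ : Real.sqrt (b/(a*t)) = Real.sqrt b / (Real.sqrt a * Real.sqrt t) := by
      rw [Real.sqrt_div hb.le, Real.sqrt_mul ha.le]
    rw [hsφ]
    have hA : Real.sqrt a * Real.sqrt a = a := Real.mul_self_sqrt ha.le
    have hB : Real.sqrt b * Real.sqrt b = b := Real.mul_self_sqrt hb.le
    have hT : Real.sqrt t * Real.sqrt t = t := Real.mul_self_sqrt ht0.le
    rw [div_div_eq_mul_div, div_mul_div_comm, ← mul_div_assoc, ← mul_div_assoc,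
        div_eq_div_iff (by positivity) (by positivity)]
    linear_combination (b * Real.exp (-(a*t) - b/t) * t * (Real.sqrt t * Real.sqrt t)) * hA
      + (a * b * Real.exp (-(a*t) - b/t) * t) * hT
      + (-(a * Real.exp (-(a*t) - b/t) * t^2)) * hB
  -- put everything together
  have hPi : Real.sqrt π = Real.exp (2*Real.sqrt (a*b)) *
      (Real.sqrt b * ∫ t in Ioi (0:ℝ), f2 t) := by
    have h0 : Real.sqrt π = Real.exp (2*Real.sqrt (a*b)) *
        ((Real.sqrt a / 2) * (∫ t in Ioi (0:ℝ), f1 t)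
          + (Real.sqrt b / 2) * (∫ t in Ioi (0:ℝ), f2 t)) := by
      rw [← hgauss, hCoV, hsplit]
    linear_combination h0 + (Real.exp (2*Real.sqrt (a*b)) / 2) * hJ
  rw [Real.sqrt_div pi_pos.le, Real.exp_neg]
  have hC : Real.exp (2*Real.sqrt (a*b)) ≠ 0 := (Real.exp_pos _).ne'
  set E := Real.exp (2*Real.sqrt (a*b)) with hE
  field_simp
  linear_combination -hPi

theorem stmt_6 (q μ σ d : ℝ) (hq : 0 < q) (hσ : 0 < σ) (hd : d ≠ 0) :
    ∫ t in Set.Ioi (0:ℝ),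
        Real.exp (-q*t) * (|d|/(σ * Real.sqrt (2*Real.pi*t^3)))
          * Real.exp (-(d - μ*t)^2/(2*σ^2*t))
      = Real.exp (μ*d/σ^2 - |d| * Real.sqrt (2*q*σ^2 + μ^2)/σ^2) := by
  have hd2 : (0:ℝ) < d^2 := by positivity
  set a : ℝ := q + μ^2/(2*σ^2) with ha'
  set b : ℝ := d^2/(2*σ^2) with hb'
  have ha : 0 < a := by rw [ha']; positivity
  have hb : 0 < b := by rw [hb']; positivity
  have habs : (0:ℝ) < |d| := abs_pos.2 hd
  have hsπ : (0:ℝ) < Real.sqrt (2*Real.pi) := Real.sqrt_pos.2 (by positivity)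
  have hstep : ∀ t ∈ Ioi (0:ℝ),
      Real.exp (-q*t) * (|d|/(σ * Real.sqrt (2*Real.pi*t^3)))
          * Real.exp (-(d - μ*t)^2/(2*σ^2*t))
        = (Real.exp (μ*d/σ^2) * (|d|/(σ * Real.sqrt (2*Real.pi))))
            * (Real.exp (-(a*t) - b/t) / (t * Real.sqrt t)) := by
    intro t ht
    have ht0 : (0:ℝ) < t := ht
    have hst : (0:ℝ) < Real.sqrt t := Real.sqrt_pos.2 ht0
    have h1 : Real.sqrt (2*Real.pi*t^3) = Real.sqrt (2*Real.pi) * (t * Real.sqrt t) := by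
      rw [Real.sqrt_mul (by positivity : (0:ℝ) ≤ 2*Real.pi) (t^3)]
      congr 1
      rw [show t^3 = t^2*t by ring, Real.sqrt_mul (sq_nonneg t), Real.sqrt_sq ht0.le]
    have h2 : Real.exp (-q*t) * Real.exp (-(d - μ*t)^2/(2*σ^2*t))
        = Real.exp (μ*d/σ^2) * Real.exp (-(a*t) - b/t) := by
      rw [← Real.exp_add, ← Real.exp_add]
      congr 1
      rw [ha', hb']
      field_simp
      ring
    rw [h1]
    linear_combination (|d| / (σ * Real.sqrt (2*Real.pi) * (t * Real.sqrt t))) * h2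
  rw [setIntegral_congr_fun measurableSet_Ioi hstep, integral_const_mul, key a b ha hb]
  have e1 : π / b = (2*Real.pi) * σ^2 / d^2 := by
    rw [hb']
    field_simp
  have e2 : Real.sqrt (π/b) = Real.sqrt (2*Real.pi) * σ / |d| := by
    rw [e1, Real.sqrt_div (by positivity), Real.sqrt_mul (by positivity) (σ^2),
        Real.sqrt_sq hσ.le, Real.sqrt_sq_eq_abs]
  have e3' : a*b = (2*q*σ^2 + μ^2) * (d/(2*σ^2))^2 := by
    rw [ha', hb']
    field_simp
  have e3 : Real.sqrt (a*b) = Real.sqrt (2*q*σ^2+μ^2) * (|d|/(2*σ^2)) := by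
    rw [e3', Real.sqrt_mul (by positivity), Real.sqrt_sq_eq_abs, abs_div,
        abs_of_pos (by positivity : (0:ℝ) < 2*σ^2)]
  rw [e2, e3]
  have harg : -(2 * (Real.sqrt (2*q*σ^2+μ^2) * (|d|/(2*σ^2))))
      = -(|d| * Real.sqrt (2*q*σ^2+μ^2)/σ^2) := by
    field_simp
  rw [harg, Real.exp_sub, Real.exp_neg]
  have h3 : Real.exp (|d| * Real.sqrt (2*q*σ^2 + μ^2)/σ^2) ≠ 0 := (Real.exp_pos _).ne'
  field_simp
end

section
/- Let q > 0, μ ∈ ℝ, σ > 0, a < b, x ∈ [a, b], and l = √(2qσ² + μ²)/σ². Define K(z) = (2q/(l σ² sinh((b−a)l))) · e^{μ(z−x)/σ²} · sinh((min(x,z) − a)l) · sinh((b − max(x,z))l) for z ∈ [a, b]. Then ∫_a^b K(z) dz + e^{μ(a−x)/σ²} sinh((b−x)l)/sinh((b−a)l) + e^{μ(b−x)/σ²} sinh((x−a)l)/sinh((b−a)l) = 1. -/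
open MeasureTheory

lemma antider1 (c l r x : ℝ) (h : c^2 - l^2 ≠ 0) (z : ℝ) :
    HasDerivAt (fun z => Real.exp (c*(z-x)) *
        (c * Real.sinh ((z-r)*l) - l * Real.cosh ((z-r)*l)) / (c^2 - l^2))
      (Real.exp (c*(z-x)) * Real.sinh ((z-r)*l)) z := by
  have h1 : HasDerivAt (fun z : ℝ => c*(z-x)) c z := by
    simpa using ((hasDerivAt_id z).sub_const x).const_mul c
  have he : HasDerivAt (fun z : ℝ => Real.exp (c*(z-x))) (Real.exp (c*(z-x)) * c) z := h1.exp
  have h2 : HasDerivAt (fun z : ℝ => (z-r)*l) l z := by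
    simpa using ((hasDerivAt_id z).sub_const r).mul_const l
  have hs : HasDerivAt (fun z : ℝ => Real.sinh ((z-r)*l)) (Real.cosh ((z-r)*l) * l) z := h2.sinh
  have hcc : HasDerivAt (fun z : ℝ => Real.cosh ((z-r)*l)) (Real.sinh ((z-r)*l) * l) z := h2.cosh
  have := (he.mul ((hs.const_mul c).sub (hcc.const_mul l))).div_const (c^2-l^2)
  refine this.congr_deriv ?_
  rw [div_eq_iff h]
  simp only [Pi.sub_apply, Pi.add_apply]
  ring

lemma antider2 (c l r x : ℝ) (h : c^2 - l^2 ≠ 0) (z : ℝ) :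
    HasDerivAt (fun z => Real.exp (c*(z-x)) *
        (c * Real.sinh ((r-z)*l) + l * Real.cosh ((r-z)*l)) / (c^2 - l^2))
      (Real.exp (c*(z-x)) * Real.sinh ((r-z)*l)) z := by
  have h1 : HasDerivAt (fun z : ℝ => c*(z-x)) c z := by
    simpa using ((hasDerivAt_id z).sub_const x).const_mul c
  have he : HasDerivAt (fun z : ℝ => Real.exp (c*(z-x))) (Real.exp (c*(z-x)) * c) z := h1.exp
  have h2 : HasDerivAt (fun z : ℝ => (r-z)*l) (-l) z := by
    simpa using ((hasDerivAt_id z).const_sub r).mul_const l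
  have hs : HasDerivAt (fun z : ℝ => Real.sinh ((r-z)*l)) (Real.cosh ((r-z)*l) * (-l)) z := h2.sinh
  have hcc : HasDerivAt (fun z : ℝ => Real.cosh ((r-z)*l)) (Real.sinh ((r-z)*l) * (-l)) z := h2.cosh
  have := (he.mul ((hs.const_mul c).add (hcc.const_mul l))).div_const (c^2-l^2)
  refine this.congr_deriv ?_
  rw [div_eq_iff h]
  simp only [Pi.sub_apply, Pi.add_apply]
  ring

theorem stmt_10 (q μ σ a b x : ℝ) (hq : 0 < q) (hσ : 0 < σ)
    (hab : a < b) (hax : a ≤ x) (hxb : x ≤ b)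
    (l : ℝ) (hl : l = Real.sqrt (2*q*σ^2 + μ^2) / σ^2) :
    (∫ z in a..b,
        (2*q/(l * σ^2 * Real.sinh ((b-a)*l))) * Real.exp (μ*(z-x)/σ^2)
          * Real.sinh ((min x z - a)*l) * Real.sinh ((b - max x z)*l))
      + Real.exp (μ*(a-x)/σ^2) * Real.sinh ((b-x)*l) / Real.sinh ((b-a)*l)
      + Real.exp (μ*(b-x)/σ^2) * Real.sinh ((x-a)*l) / Real.sinh ((b-a)*l)
    = 1 := by
  have hσ2 : (0:ℝ) < σ^2 := by positivity
  set c : ℝ := μ/σ^2 with hc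
  have hargpos : (0:ℝ) < 2*q*σ^2 + μ^2 := by positivity
  have hlpos : 0 < l := by rw [hl]; positivity
  have hl2 : σ^2*(l^2 - c^2) = 2*q := by
    rw [hl, hc, div_pow, Real.sq_sqrt hargpos.le]
    field_simp
    ring
  have hcl : c^2 - l^2 ≠ 0 := by nlinarith
  have hS : 0 < Real.sinh ((b-a)*l) := by
    have : (0:ℝ) < (b-a)*l := by nlinarith
    simpa using Real.sinh_lt_sinh.mpr this
  set K0 : ℝ := 2*q/(l * σ^2 * Real.sinh ((b-a)*l)) with hK0
  -- integrability of the full integrand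
  have hcont : Continuous (fun z : ℝ => K0 * Real.exp (μ*(z-x)/σ^2)
      * Real.sinh ((min x z - a)*l) * Real.sinh ((b - max x z)*l)) := by
    fun_prop
  have hsplit :
      (∫ z in a..b, K0 * Real.exp (μ*(z-x)/σ^2)
          * Real.sinh ((min x z - a)*l) * Real.sinh ((b - max x z)*l))
      = (∫ z in a..x, K0 * Real.exp (μ*(z-x)/σ^2)
          * Real.sinh ((min x z - a)*l) * Real.sinh ((b - max x z)*l))
      + (∫ z in x..b, K0 * Real.exp (μ*(z-x)/σ^2)
          * Real.sinh ((min x z - a)*l) * Real.sinh ((b - max x z)*l)) := by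
    rw [intervalIntegral.integral_add_adjacent_intervals
      (hcont.intervalIntegrable _ _) (hcont.intervalIntegrable _ _)]
  have hcong1 :
      (∫ z in a..x, K0 * Real.exp (μ*(z-x)/σ^2)
          * Real.sinh ((min x z - a)*l) * Real.sinh ((b - max x z)*l))
      = ∫ z in a..x, (K0 * Real.sinh ((b - x)*l)) *
          (Real.exp (c*(z-x)) * Real.sinh ((z-a)*l)) := by
    apply intervalIntegral.integral_congr
    intro z hz
    rw [Set.uIcc_of_le hax] at hz
    dsimp only
    rw [min_eq_right hz.2, max_eq_left hz.2,
      show μ*(z-x)/σ^2 = c*(z-x) by rw [hc]; ring]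
    ring
  have hcong2 :
      (∫ z in x..b, K0 * Real.exp (μ*(z-x)/σ^2)
          * Real.sinh ((min x z - a)*l) * Real.sinh ((b - max x z)*l))
      = ∫ z in x..b, (K0 * Real.sinh ((x - a)*l)) *
          (Real.exp (c*(z-x)) * Real.sinh ((b-z)*l)) := by
    apply intervalIntegral.integral_congr
    intro z hz
    rw [Set.uIcc_of_le hxb] at hz
    dsimp only
    rw [min_eq_left hz.1, max_eq_right hz.1,
      show μ*(z-x)/σ^2 = c*(z-x) by rw [hc]; ring]
    ring
  have hJ1 : (∫ z in a..x, Real.exp (c*(z-x)) * Real.sinh ((z-a)*l))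
      = Real.exp (c*(x-x)) * (c * Real.sinh ((x-a)*l) - l * Real.cosh ((x-a)*l)) / (c^2 - l^2)
        - Real.exp (c*(a-x)) * (c * Real.sinh ((a-a)*l) - l * Real.cosh ((a-a)*l)) / (c^2 - l^2) := by
    exact intervalIntegral.integral_eq_sub_of_hasDerivAt
      (fun z _ => antider1 c l a x hcl z)
      (by apply Continuous.intervalIntegrable; fun_prop)
  have hJ2 : (∫ z in x..b, Real.exp (c*(z-x)) * Real.sinh ((b-z)*l))
      = Real.exp (c*(b-x)) * (c * Real.sinh ((b-b)*l) + l * Real.cosh ((b-b)*l)) / (c^2 - l^2)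
        - Real.exp (c*(x-x)) * (c * Real.sinh ((b-x)*l) + l * Real.cosh ((b-x)*l)) / (c^2 - l^2) := by
    exact intervalIntegral.integral_eq_sub_of_hasDerivAt
      (fun z _ => antider2 c l b x hcl z)
      (by apply Continuous.intervalIntegrable; fun_prop)
  rw [hsplit, hcong1, hcong2, intervalIntegral.integral_const_mul,
    intervalIntegral.integral_const_mul, hJ1, hJ2,
    show μ*(a-x)/σ^2 = c*(a-x) by rw [hc]; ring,
    show μ*(b-x)/σ^2 = c*(b-x) by rw [hc]; ring]
  simp only [sub_self, zero_mul, mul_zero, Real.exp_zero, Real.sinh_zero, Real.cosh_zero]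
  rw [hK0, show (b-a)*l = (x-a)*l + (b-x)*l by ring, Real.sinh_add, ← hl2]
  have hS' : Real.sinh ((x-a)*l) * Real.cosh ((b-x)*l)
      + Real.cosh ((x-a)*l) * Real.sinh ((b-x)*l) ≠ 0 := by
    rw [← Real.sinh_add, show (x-a)*l + (b-x)*l = (b-a)*l by ring]
    exact hS.ne'
  generalize Real.sinh ((x-a)*l) = s1 at *
  generalize Real.sinh ((b-x)*l) = s2 at *
  generalize Real.cosh ((x-a)*l) = c1 at *
  generalize Real.cosh ((b-x)*l) = c2 at *
  field_simp
  ring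
end

section
/- Let μ₀ > 0 > μ₁ and σ₀, σ₁ > 0. With l₁(q) = √(2qσ₁² + μ₁²)/σ₁² and c₁⁺(q) = (δ₁⁻ − δ₀⁻)/(δ₁⁺ + δ₁⁻) where δ_i^± = (√(2qσ_i² + μ_i²) ± μ_i)/σ_i², one has lim_{q→0⁺} 2 l₁(q)(1 − c₁⁺(q))/q = 1/μ₀ − 1/μ₁. -/
theorem stmt_14 (μ₀ μ₁ σ₀ σ₁ : ℝ) (h0 : 0 < μ₀) (h1 : μ₁ < 0)
    (hσ0 : 0 < σ₀) (hσ1 : 0 < σ₁) :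
    Filter.Tendsto
      (fun q : ℝ =>
        2 * (Real.sqrt (2*q*σ₁^2 + μ₁^2)/σ₁^2)
          * (1 - ((Real.sqrt (2*q*σ₁^2 + μ₁^2) - μ₁)/σ₁^2
                    - (Real.sqrt (2*q*σ₀^2 + μ₀^2) - μ₀)/σ₀^2)
              / ((Real.sqrt (2*q*σ₁^2 + μ₁^2) + μ₁)/σ₁^2
                    + (Real.sqrt (2*q*σ₁^2 + μ₁^2) - μ₁)/σ₁^2))
          / q)
      (nhdsWithin 0 (Set.Ioi 0)) (nhds (1/μ₀ - 1/μ₁)) := by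
  set g : ℝ → ℝ := fun q =>
    2 / (Real.sqrt (2*q*σ₀^2 + μ₀^2) + μ₀) + 2 / (Real.sqrt (2*q*σ₁^2 + μ₁^2) - μ₁)
    with hg
  have heq : ∀ q ∈ Set.Ioi (0:ℝ),
      g q = 2 * (Real.sqrt (2*q*σ₁^2 + μ₁^2)/σ₁^2)
          * (1 - ((Real.sqrt (2*q*σ₁^2 + μ₁^2) - μ₁)/σ₁^2
                    - (Real.sqrt (2*q*σ₀^2 + μ₀^2) - μ₀)/σ₀^2)
              / ((Real.sqrt (2*q*σ₁^2 + μ₁^2) + μ₁)/σ₁^2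
                    + (Real.sqrt (2*q*σ₁^2 + μ₁^2) - μ₁)/σ₁^2))
          / q := by
    intro q hq
    have hq0 : 0 < q := hq
    set a := Real.sqrt (2*q*σ₁^2 + μ₁^2) with hadef
    set b := Real.sqrt (2*q*σ₀^2 + μ₀^2) with hbdef
    have ha2 : a^2 = 2*q*σ₁^2 + μ₁^2 := Real.sq_sqrt (by positivity)
    have hb2 : b^2 = 2*q*σ₀^2 + μ₀^2 := Real.sq_sqrt (by positivity)
    have hapos : 0 < a := Real.sqrt_pos.mpr (by positivity)
    have hbpos : 0 < b := Real.sqrt_pos.mpr (by positivity)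
    have ham : 0 < a - μ₁ := by linarith
    have hbm : 0 < b + μ₀ := by linarith
    have hs1 : (σ₁:ℝ)^2 ≠ 0 := by positivity
    have hs0 : (σ₀:ℝ)^2 ≠ 0 := by positivity
    clear_value a b
    rw [hg]
    simp only [← hadef, ← hbdef]
    have hR : 2 * (a/σ₁^2) * (1 - ((a - μ₁)/σ₁^2 - (b - μ₀)/σ₀^2)
        / ((a + μ₁)/σ₁^2 + (a - μ₁)/σ₁^2)) / q
        = (a + μ₁)/σ₁^2/q + (b - μ₀)/σ₀^2/q := by
      have hden : (a + μ₁)/σ₁^2 + (a - μ₁)/σ₁^2 = 2*a/σ₁^2 := by ring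
      rw [hden]
      field_simp
      ring
    rw [hR]
    have e1 : (a + μ₁)/σ₁^2/q = 2/(a - μ₁) := by
      rw [div_div, div_eq_div_iff (by positivity) ham.ne']
      linear_combination ha2
    have e2 : (b - μ₀)/σ₀^2/q = 2/(b + μ₀) := by
      rw [div_div, div_eq_div_iff (by positivity) hbm.ne']
      linear_combination hb2
    rw [e1, e2]
    ring
  have hev : g =ᶠ[nhdsWithin 0 (Set.Ioi 0)] _ :=
    Filter.eventuallyEq_of_mem self_mem_nhdsWithin heq
  refine Filter.Tendsto.congr' hev ?_
  have h00 : Real.sqrt (2*(0:ℝ)*σ₀^2 + μ₀^2) = μ₀ := by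
    rw [show 2*(0:ℝ)*σ₀^2 + μ₀^2 = μ₀^2 by ring, Real.sqrt_sq h0.le]
  have h01 : Real.sqrt (2*(0:ℝ)*σ₁^2 + μ₁^2) = -μ₁ := by
    rw [show 2*(0:ℝ)*σ₁^2 + μ₁^2 = μ₁^2 by ring, Real.sqrt_sq_eq_abs,
      abs_of_neg h1]
  have hc : ContinuousAt g 0 := by
    apply ContinuousAt.add
    · apply ContinuousAt.div continuousAt_const
      · exact (Real.continuous_sqrt.comp (by continuity)).continuousAt.add
          continuousAt_const
      · simp only [h00]; linarith
    · apply ContinuousAt.div continuousAt_const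
      · exact (Real.continuous_sqrt.comp (by continuity)).continuousAt.sub
          continuousAt_const
      · simp only [h01]; linarith
  have hval : g 0 = 1/μ₀ - 1/μ₁ := by
    rw [hg]; simp only [h00, h01]
    field_simp
    ring
  have := hc.tendsto
  rw [hval] at this
  exact this.mono_left nhdsWithin_le_nhds
end

section
/- Let μ₁ > 0 and μ₀ > 0 with σ₀, σ₁ > 0. With c₁⁺(q) = (δ₁⁻ − δ₀⁻)/(δ₁⁺ + δ₁⁻), where δ_i⁻ = (√(2qσ_i² + μ_i²) − μ_i)/σ_i² and δ_i⁺ = (√(2qσ_i² + μ_i²) + μ_i)/σ_i², and l₁(q) = √(2qσ₁² + μ₁²)/σ₁², one has lim_{q→0⁺} −2 l₁(q) c₁⁺(q)/q = 1/μ₀ − 1/μ₁. -/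
open Filter Real

lemma aux_tendsto (μ σ : ℝ) (hμ : 0 < μ) :
    Tendsto (fun q : ℝ => 2 / (Real.sqrt (2*q*σ^2 + μ^2) + μ)) (nhds 0)
      (nhds (1/μ)) := by
  have hc : Continuous (fun q : ℝ => Real.sqrt (2*q*σ^2 + μ^2) + μ) := by
    continuity
  have h0 : Real.sqrt (2*0*σ^2 + μ^2) + μ = 2*μ := by
    rw [show 2*(0:ℝ)*σ^2 + μ^2 = μ^2 by ring, Real.sqrt_sq hμ.le]
    ring
  have := (tendsto_const_nhds (x := (2:ℝ))).div (hc.tendsto 0)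
    (by rw [h0]; positivity)
  rw [h0] at this
  convert this using 2
  · rfl
  · ring

theorem stmt_15 (μ₀ μ₁ σ₀ σ₁ : ℝ) (h0 : 0 < μ₀) (h1 : 0 < μ₁)
    (hσ0 : 0 < σ₀) (hσ1 : 0 < σ₁) :
    Filter.Tendsto
      (fun q : ℝ =>
        -(2 * (Real.sqrt (2*q*σ₁^2 + μ₁^2)/σ₁^2)
            * (((Real.sqrt (2*q*σ₁^2 + μ₁^2) - μ₁)/σ₁^2
                  - (Real.sqrt (2*q*σ₀^2 + μ₀^2) - μ₀)/σ₀^2)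
              / ((Real.sqrt (2*q*σ₁^2 + μ₁^2) + μ₁)/σ₁^2
                  + (Real.sqrt (2*q*σ₁^2 + μ₁^2) - μ₁)/σ₁^2)))
          / q)
      (nhdsWithin 0 (Set.Ioi 0)) (nhds (1/μ₀ - 1/μ₁)) := by
  have hg : Tendsto (fun q : ℝ =>
      2 / (Real.sqrt (2*q*σ₀^2 + μ₀^2) + μ₀)
        - 2 / (Real.sqrt (2*q*σ₁^2 + μ₁^2) + μ₁))
      (nhdsWithin 0 (Set.Ioi 0)) (nhds (1/μ₀ - 1/μ₁)) :=
    ((aux_tendsto μ₀ σ₀ h0).sub (aux_tendsto μ₁ σ₁ h1)).mono_left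
      nhdsWithin_le_nhds
  refine hg.congr' ?_
  filter_upwards [self_mem_nhdsWithin] with q (hq : 0 < q)
  have harg0 : (0:ℝ) ≤ 2*q*σ₀^2 + μ₀^2 := by positivity
  have harg1 : (0:ℝ) ≤ 2*q*σ₁^2 + μ₁^2 := by positivity
  set s0 := Real.sqrt (2*q*σ₀^2 + μ₀^2) with hs0def
  set s1 := Real.sqrt (2*q*σ₁^2 + μ₁^2) with hs1def
  have hs0sq : s0^2 = 2*q*σ₀^2 + μ₀^2 := Real.sq_sqrt harg0
  have hs1sq : s1^2 = 2*q*σ₁^2 + μ₁^2 := Real.sq_sqrt harg1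
  have hs0pos : 0 < s0 := Real.sqrt_pos.mpr (by positivity)
  have hs1pos : 0 < s1 := Real.sqrt_pos.mpr (by positivity)
  have hd0 : s0 + μ₀ > 0 := by linarith
  have hd1 : s1 + μ₁ > 0 := by linarith
  have e0 : (s0 - μ₀)/σ₀^2 = 2*q/(s0+μ₀) := by
    rw [div_eq_div_iff (by positivity) hd0.ne']
    linear_combination hs0sq
  have e1 : (s1 - μ₁)/σ₁^2 = 2*q/(s1+μ₁) := by
    rw [div_eq_div_iff (by positivity) hd1.ne']
    linear_combination hs1sq
  have step1 :
      -(2 * (s1/σ₁^2) * (((s1 - μ₁)/σ₁^2 - (s0 - μ₀)/σ₀^2)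
          / ((s1 + μ₁)/σ₁^2 + (s1 - μ₁)/σ₁^2))) / q
        = ((s0 - μ₀)/σ₀^2 - (s1 - μ₁)/σ₁^2)/q := by
    have hσ0' : σ₀^2 ≠ 0 := by positivity
    have hσ1' : σ₁^2 ≠ 0 := by positivity
    have hs1' : s1 ≠ 0 := hs1pos.ne'
    field_simp
    linear_combination (μ₁ * σ₀ ^ 2 + σ₁ ^ 2 * s0 - σ₁ ^ 2 * μ₀ - s1 * σ₀ ^ 2) * mul_inv_cancel₀ hs1'
  rw [step1, e0, e1]
  field_simp
end

section
/- Let μ₀ < 0 < μ₁, σ₀, σ₁ > 0, a ∈ ℝ, and set D = μ₀/σ₀² − μ₁/σ₁² (< 0). Define h : ℝ → ℝ by h(y) = 1 + (μ₁/σ₁²)/D · e^{2μ₀(a−y)/σ₀²} for y ≤ a, and h(y) = (μ₀/σ₀²)/D · e^{−2μ₁(y−a)/σ₁²} for y > a. Then: (i) h is continuous on ℝ and differentiable on ℝ with continuous derivative, the one-sided derivatives at a agreeing; (ii) on (−∞, a), μ₀ h′(y) + (σ₀²/2) h″(y) = 0, and on (a, ∞), μ₁ h′(y) + (σ₁²/2)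 h″(y) = 0; (iii) lim_{y→−∞} h(y) = 1 and lim_{y→+∞} h(y) = 0; (iv) 0 ≤ h(y) ≤ 1 for all y. -/
open Set Filter Real

theorem stmt_17 (μ₀ μ₁ σ₀ σ₁ a : ℝ) (h0 : μ₀ < 0) (h1 : 0 < μ₁)
    (hσ0 : 0 < σ₀) (hσ1 : 0 < σ₁)
    (D : ℝ) (hD : D = μ₀/σ₀^2 - μ₁/σ₁^2)
    (h : ℝ → ℝ)
    (hh : ∀ y, h y = if y ≤ a then
        1 + (μ₁/σ₁^2)/D * Real.exp (2*μ₀*(a-y)/σ₀^2)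
      else
        (μ₀/σ₀^2)/D * Real.exp (-2*μ₁*(y-a)/σ₁^2)) :
    Continuous h ∧ Differentiable ℝ h ∧ Continuous (deriv h) ∧
    derivWithin h (Set.Iic a) a = derivWithin h (Set.Ici a) a ∧
    (∀ y, y < a → μ₀ * deriv h y + σ₀^2/2 * deriv (deriv h) y = 0) ∧
    (∀ y, a < y → μ₁ * deriv h y + σ₁^2/2 * deriv (deriv h) y = 0) ∧
    Filter.Tendsto h Filter.atBot (nhds 1) ∧
    Filter.Tendsto h Filter.atTop (nhds 0) ∧
    (∀ y, 0 ≤ h y ∧ h y ≤ 1) := by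
  have hs0 : (0:ℝ) < σ₀^2 := by positivity
  have hs1 : (0:ℝ) < σ₁^2 := by positivity
  have hDneg : D < 0 := by
    rw [hD]
    have : μ₀/σ₀^2 < 0 := div_neg_of_neg_of_pos h0 hs0
    have : 0 < μ₁/σ₁^2 := div_pos h1 hs1
    linarith
  have hDne : D ≠ 0 := hDneg.ne
  set c₀ : ℝ := (μ₁/σ₁^2)/D with hc₀def
  set c₁ : ℝ := (μ₀/σ₀^2)/D with hc₁def
  have hc0neg : c₀ < 0 := div_neg_of_pos_of_neg (div_pos h1 hs1) hDneg
  have hc1pos : 0 < c₁ := div_pos_of_neg_of_neg (div_neg_of_neg_of_pos h0 hs0) hDneg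
  have hsum : c₁ = 1 + c₀ := by
    have hd : c₁ - c₀ = 1 := by
      rw [hc₁def, hc₀def, div_sub_div_same, ← hD, div_self hDne]
    linarith
  -- pieces
  set f₀ : ℝ → ℝ := fun y => 1 + c₀ * Real.exp (2*μ₀*(a-y)/σ₀^2) with hf₀def
  set f₁ : ℝ → ℝ := fun y => c₁ * Real.exp (-2*μ₁*(y-a)/σ₁^2) with hf₁def
  set d₀ : ℝ → ℝ := fun y => c₀ * (Real.exp (2*μ₀*(a-y)/σ₀^2) * (-(2*μ₀)/σ₀^2)) with hd₀def
  set d₁ : ℝ → ℝ := fun y => c₁ * (Real.exp (-2*μ₁*(y-a)/σ₁^2) * (-(2*μ₁)/σ₁^2)) with hd₁def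
  have hh' : ∀ y, h y = if y ≤ a then f₀ y else f₁ y := hh
  have hexp0 : ∀ y : ℝ, HasDerivAt (fun y => 2*μ₀*(a-y)/σ₀^2) (-(2*μ₀)/σ₀^2) y := by
    intro y
    have := (((hasDerivAt_id y).const_sub a).const_mul (2*μ₀)).div_const (σ₀^2)
    exact this.congr_deriv (by ring)
  have hexp1 : ∀ y : ℝ, HasDerivAt (fun y => -2*μ₁*(y-a)/σ₁^2) (-(2*μ₁)/σ₁^2) y := by
    intro y
    have := (((hasDerivAt_id y).sub_const a).const_mul (-2*μ₁)).div_const (σ₁^2)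
    exact this.congr_deriv (by ring)
  have hDf₀ : ∀ y : ℝ, HasDerivAt f₀ (d₀ y) y := fun y =>
    (((hexp0 y).exp).const_mul c₀).const_add 1
  have hDf₁ : ∀ y : ℝ, HasDerivAt f₁ (d₁ y) y := fun y =>
    ((hexp1 y).exp).const_mul c₁
  have hDd₀ : ∀ y : ℝ, HasDerivAt d₀ (c₀ * (Real.exp (2*μ₀*(a-y)/σ₀^2) * (-(2*μ₀)/σ₀^2) * (-(2*μ₀)/σ₀^2))) y := fun y =>
    (((hexp0 y).exp).mul_const _).const_mul c₀
  have hDd₁ : ∀ y : ℝ, HasDerivAt d₁ (c₁ * (Real.exp (-2*μ₁*(y-a)/σ₁^2) * (-(2*μ₁)/σ₁^2) * (-(2*μ₁)/σ₁^2))) y := fun y =>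
    (((hexp1 y).exp).mul_const _).const_mul c₁
  have hval : f₀ a = f₁ a := by
    simp only [hf₀def, hf₁def, sub_self, mul_zero, zero_div, mul_zero, zero_mul]
    norm_num [hsum]
  have hmatchd : d₀ a = d₁ a := by
    simp only [hd₀def, hd₁def, sub_self, mul_zero, zero_div, zero_mul]
    norm_num [Real.exp_zero, hc₀def, hc₁def]
    field_simp
  set g : ℝ → ℝ := fun y => if y ≤ a then d₀ y else d₁ y with hgdef
  -- h agrees with pieces
  have hagree0 : ∀ z ∈ Iic a, h z = f₀ z := by
    intro z hz
    rw [hh' z, if_pos (mem_Iic.mp hz)]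
  have hagree1 : ∀ z ∈ Ici a, h z = f₁ z := by
    intro z hz
    rcases lt_or_eq_of_le (mem_Ici.mp hz) with hlt | heq
    · exact (hh' z).trans (if_neg (not_le.2 hlt))
    · rw [hh' z, ← heq, if_pos le_rfl, hval]
  have hIic : HasDerivWithinAt h (d₀ a) (Iic a) a :=
    ((hDf₀ a).hasDerivWithinAt).congr hagree0 (hagree0 a self_mem_Iic)
  have hIci : HasDerivWithinAt h (d₁ a) (Ici a) a :=
    ((hDf₁ a).hasDerivWithinAt).congr hagree1 (hagree1 a self_mem_Ici)
  -- global derivative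
  have hHD : ∀ y : ℝ, HasDerivAt h (g y) y := by
    intro y
    rcases lt_trichotomy y a with hy | rfl | hy
    · have hev : h =ᶠ[nhds y] f₀ := by
        filter_upwards [Iio_mem_nhds hy] with z hz
        exact hagree0 z (mem_Iic.mpr (mem_Iio.mp hz).le)
      have := (hDf₀ y).congr_of_eventuallyEq hev
      simpa [hgdef, if_pos hy.le] using this
    · have : HasDerivWithinAt h (d₀ y) (Iic y ∪ Ici y) y := by
        refine hIic.union ?_
        rw [hmatchd]; exact hIci
      rw [Iic_union_Ici, hasDerivWithinAt_univ] at this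
      simpa [hgdef] using this
    · have hev : h =ᶠ[nhds y] f₁ := by
        filter_upwards [Ioi_mem_nhds hy] with z hz
        exact hagree1 z (mem_Ici.mpr (mem_Ioi.mp hz).le)
      have := (hDf₁ y).congr_of_eventuallyEq hev
      simpa [hgdef, if_neg (not_le.2 hy)] using this
  have hdiff : Differentiable ℝ h := fun y => (hHD y).differentiableAt
  have hderiv : deriv h = g := funext fun y => (hHD y).deriv
  have hcontd₀ : Continuous d₀ := by
    apply Continuous.mul continuous_const
    apply Continuous.mul _ continuous_const
    exact Real.continuous_exp.comp (by fun_prop)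
  have hcontd₁ : Continuous d₁ := by
    apply Continuous.mul continuous_const
    apply Continuous.mul _ continuous_const
    exact Real.continuous_exp.comp (by fun_prop)
  have hcontg : Continuous g := by
    rw [hgdef]
    exact Continuous.if_le hcontd₀ hcontd₁ continuous_id continuous_const
      (fun x hx => by rw [hx, hmatchd])
  refine ⟨hdiff.continuous, hdiff, by rw [hderiv]; exact hcontg, ?_, ?_, ?_, ?_, ?_, ?_⟩
  · -- derivWithin equality
    rw [hIic.derivWithin ((uniqueDiffOn_Iic a) a self_mem_Iic),
        hIci.derivWithin ((uniqueDiffOn_Ici a) a self_mem_Ici), hmatchd]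
  · -- ODE below a
    intro y hy
    have hev : g =ᶠ[nhds y] d₀ := by
      filter_upwards [Iio_mem_nhds hy] with z hz
      show g z = d₀ z
      simp only [hgdef]
      exact if_pos (mem_Iio.mp hz).le
    have hgd : HasDerivAt g (c₀ * (Real.exp (2*μ₀*(a-y)/σ₀^2) * (-(2*μ₀)/σ₀^2) * (-(2*μ₀)/σ₀^2))) y :=
      (hDd₀ y).congr_of_eventuallyEq hev
    rw [hderiv, hgd.deriv, hgdef]
    simp only [if_pos hy.le, hd₀def]
    have hσ0' : σ₀ ≠ 0 := hσ0.ne'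
    field_simp
    ring
  · -- ODE above a
    intro y hy
    have hev : g =ᶠ[nhds y] d₁ := by
      filter_upwards [Ioi_mem_nhds hy] with z hz
      show g z = d₁ z
      simp only [hgdef]
      exact if_neg (not_le.2 (mem_Ioi.mp hz))
    have hgd : HasDerivAt g (c₁ * (Real.exp (-2*μ₁*(y-a)/σ₁^2) * (-(2*μ₁)/σ₁^2) * (-(2*μ₁)/σ₁^2))) y :=
      (hDd₁ y).congr_of_eventuallyEq hev
    rw [hderiv, hgd.deriv, hgdef]
    simp only [if_neg (not_le.2 hy), hd₁def]
    have hσ1' : σ₁ ≠ 0 := hσ1.ne'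
    field_simp
    ring
  · -- tendsto atBot
    have hev : h =ᶠ[atBot] f₀ := by
      filter_upwards [eventually_le_atBot a] with y hy
      exact hagree0 y (mem_Iic.mpr hy)
    have harg : Tendsto (fun y : ℝ => 2*μ₀*(a-y)/σ₀^2) atBot atBot := by
      apply Tendsto.atBot_div_const hs0
      apply Tendsto.const_mul_atTop_of_neg (by linarith : 2*μ₀ < 0)
      exact tendsto_atTop_add_const_left _ a tendsto_neg_atBot_atTop
    have : Tendsto f₀ atBot (nhds (1 + c₀ * 0)) :=
      ((Real.tendsto_exp_atBot.comp harg).const_mul c₀).const_add 1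
    rw [mul_zero, add_zero] at this
    exact Tendsto.congr' hev.symm this
  · -- tendsto atTop
    have hev : h =ᶠ[atTop] f₁ := by
      filter_upwards [eventually_gt_atTop a] with y hy
      exact hagree1 y (mem_Ici.mpr hy.le)
    have harg : Tendsto (fun y : ℝ => -2*μ₁*(y-a)/σ₁^2) atTop atBot := by
      apply Tendsto.atBot_div_const hs1
      apply Tendsto.const_mul_atTop_of_neg (by linarith : -2*μ₁ < 0)
      exact tendsto_atTop_add_const_right _ (-a) tendsto_id
    have : Tendsto f₁ atTop (nhds (c₁ * 0)) :=
      (Real.tendsto_exp_atBot.comp (by simpa [sub_eq_add_neg] using harg)).const_mul c₁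
    rw [mul_zero] at this
    exact Tendsto.congr' hev.symm this
  · -- bounds
    intro y
    rw [hh' y]
    split_ifs with hy
    · set E := Real.exp (2*μ₀*(a-y)/σ₀^2) with hE
      have hE0 : 0 < E := Real.exp_pos _
      have hE1 : E ≤ 1 := by
        rw [hE, Real.exp_le_one_iff]
        apply div_nonpos_of_nonpos_of_nonneg _ hs0.le
        nlinarith
      constructor
      · simp only [hf₀def]
        nlinarith
      · simp only [hf₀def]
        nlinarith
    · set E := Real.exp (-2*μ₁*(y-a)/σ₁^2) with hE
      push_neg at hy
      have hE0 : 0 < E := Real.exp_pos _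
      have hE1 : E ≤ 1 := by
        rw [hE, Real.exp_le_one_iff]
        apply div_nonpos_of_nonpos_of_nonneg _ hs1.le
        nlinarith
      have hc1lt : c₁ ≤ 1 := by rw [hsum]; linarith
      constructor
      · simp only [hf₁def]; positivity
      · simp only [hf₁def]; nlinarith
end
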